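/- Let G be a finite abelian group (or more generally, let φ be a one-dimensional character of a finite group G) and let n be a positive divisor of exp(G). Then ∑_{ρ ⊆ π(n)} (−1)^{|ρ|} ⟨Ψ^{n(ρ)}(φ), 1_G⟩ equals 1 if n divides o(φ), and 0 otherwise. -/

import Mathlib

/-- `nrho N n ρ` is the integer with `q`-adic valuation `v_q(n) - 1` for `q ∈ ρ`
and `v_q(N)` for primes `q ∉ ρ`. -/
def nrho (N n : ℕ) (ρ : Finset ℕ) : ℕ :=
  ∏ p ∈ N.primeFactors, p ^ (if p ∈ ρ then n.factorization p - 1 else N.factorization p)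

lemma nrho_ne_zero (N n : ℕ) (ρ : Finset ℕ) : nrho N n ρ ≠ 0 :=
  Finset.prod_ne_zero_iff.mpr fun p hp => pow_ne_zero _ (Nat.prime_of_mem_primeFactors hp).pos.ne'

lemma nrho_factorization (N n : ℕ) (ρ : Finset ℕ) (q : ℕ) :
    (nrho N n ρ).factorization q =
      if q ∈ N.primeFactors then
        (if q ∈ ρ then n.factorization q - 1 else N.factorization q) else 0 := by
  classical
  rw [nrho, Nat.factorization_prod
    (fun p hp => pow_ne_zero _ (Nat.prime_of_mem_primeFactors hp).pos.ne')]
  rw [Finset.sum_apply']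
  have : ∀ p ∈ N.primeFactors,
      (p ^ (if p ∈ ρ then n.factorization p - 1 else N.factorization p)).factorization q =
        if p = q then (if p ∈ ρ then n.factorization p - 1 else N.factorization p) else 0 := by
    intro p hp
    rw [(Nat.prime_of_mem_primeFactors hp).factorization_pow]
    simp [Finsupp.single_apply]
  rw [Finset.sum_congr rfl this, Finset.sum_ite_eq']

lemma dvd_nrho_iff {d N n : ℕ} (hd0 : d ≠ 0) (hdN : d ∣ N) (hN : N ≠ 0)
    {ρ : Finset ℕ} (hρ : ρ ⊆ n.primeFactors) (hnN : n ∣ N) :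
    d ∣ nrho N n ρ ↔ ∀ p ∈ ρ, d.factorization p ≤ n.factorization p - 1 := by
  have hdNf : d.factorization ≤ N.factorization :=
    (Nat.factorization_le_iff_dvd hd0 hN).mpr hdN
  rw [← Nat.factorization_le_iff_dvd hd0 (nrho_ne_zero N n ρ)]
  constructor
  · intro h p hp
    have hpN : p ∈ N.primeFactors :=
      Nat.primeFactors_mono hnN hN (hρ hp)
    have := h p
    rwa [nrho_factorization, if_pos hpN, if_pos hp] at this
  · intro h q
    rw [nrho_factorization]
    by_cases hqN : q ∈ N.primeFactors
    · rw [if_pos hqN]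
      by_cases hq : q ∈ ρ
      · rw [if_pos hq]; exact h q hq
      · rw [if_neg hq]; exact hdNf q
    · rw [if_neg hqN]
      have : N.factorization q = 0 := by
        rw [← Finsupp.notMem_support_iff, Nat.support_factorization]; exact hqN
      have := hdNf q
      omega

theorem stmt_18 (G : Type) [Group G] [Fintype G] (φ : G →* ℂˣ)
    (n : ℕ) (hn0 : 0 < n) (hn : n ∣ Monoid.exponent G) :
    (∑ ρ ∈ n.primeFactors.powerset, (-1 : ℂ) ^ ρ.card *
        ((Fintype.card G : ℂ)⁻¹ *
          ∑ g : G, ((φ (g ^ nrho (Monoid.exponent G) n ρ) : ℂˣ) : ℂ))) =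
      if n ∣ orderOf φ then 1 else 0 := by
  classical
  set N := Monoid.exponent G with hNdef
  have hN : N ≠ 0 := Monoid.exponent_ne_zero_of_finite
  set d := orderOf φ with hddef
  have hφN : φ ^ N = 1 := by
    ext g
    simp [hNdef, Monoid.pow_exponent_eq_one g, ← map_pow]
  have hdN : d ∣ N := orderOf_dvd_of_pow_eq_one hφN
  have hd0 : d ≠ 0 := by
    have : IsOfFinOrder φ := isOfFinOrder_iff_pow_eq_one.mpr
      ⟨N, Nat.pos_of_ne_zero hN, hφN⟩
    exact this.orderOf_pos.ne'
  -- Step 1: evaluate the inner character sum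
  have inner : ∀ m : ℕ, (Fintype.card G : ℂ)⁻¹ * ∑ g : G, ((φ (g ^ m) : ℂˣ) : ℂ) =
      if d ∣ m then 1 else 0 := by
    intro m
    have key : ∑ g : G, ((φ (g ^ m) : ℂˣ) : ℂ) =
        ∑ g : G, ((Units.coeHom ℂ).comp (φ ^ m)) g := by
      apply Finset.sum_congr rfl
      intro g _
      simp [map_pow]
    rw [key, sum_hom_units]
    have hiff : (Units.coeHom ℂ).comp (φ ^ m) = 1 ↔ d ∣ m := by
      constructor
      · intro h
        rw [hddef, orderOf_dvd_iff_pow_eq_one]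
        ext g
        have := DFunLike.congr_fun h g
        simpa [Units.ext_iff] using this
      · intro h
        have h2 : φ ^ m = 1 := orderOf_dvd_iff_pow_eq_one.mp h
        rw [h2]; ext g; simp
    have hcard : (Fintype.card G : ℂ) ≠ 0 := Nat.cast_ne_zero.mpr Fintype.card_ne_zero
    by_cases h : d ∣ m
    · rw [if_pos h, if_pos (hiff.mpr h), inv_mul_cancel₀ hcard]
    · rw [if_neg h, if_neg (fun hc => h (hiff.mp hc))]; simp
  -- Step 2: rewrite as sum of indicators
  have step2 : ∀ ρ ∈ n.primeFactors.powerset,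
      (-1 : ℂ) ^ ρ.card * ((Fintype.card G : ℂ)⁻¹ *
          ∑ g : G, ((φ (g ^ nrho N n ρ) : ℂˣ) : ℂ)) =
      (∏ p ∈ ρ, ((-1 : ℂ) *
        if d.factorization p ≤ n.factorization p - 1 then 1 else 0)) * ∏ p ∈ n.primeFactors \ ρ, 1 := by
    intro ρ hρ
    rw [Finset.mem_powerset] at hρ
    rw [inner, if_congr (dvd_nrho_iff hd0 hdN hN hρ hn) rfl rfl,
      Finset.prod_mul_distrib, Finset.prod_const, Finset.prod_boole, Finset.prod_const_one,
      mul_one]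
  rw [Finset.sum_congr rfl step2, ← Finset.prod_add]
  -- Step 3: compute the product
  have step3 : ∀ p ∈ n.primeFactors,
      ((-1 : ℂ) * (if d.factorization p ≤ n.factorization p - 1 then 1 else 0) + 1) =
      if n.factorization p ≤ d.factorization p then 1 else 0 := by
    intro p hp
    have h1 : 1 ≤ n.factorization p :=
      (Nat.Prime.factorization_pos_of_dvd (Nat.prime_of_mem_primeFactors hp) hn0.ne'
        (Nat.dvd_of_mem_primeFactors hp))
    by_cases h : d.factorization p ≤ n.factorization p - 1
    · rw [if_pos h, if_neg (by omega)]; ring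
    · rw [if_neg h, if_pos (by omega)]; ring
  rw [Finset.prod_congr rfl step3, Finset.prod_boole]
  congr 1
  rw [eq_iff_iff, ← Nat.factorization_le_iff_dvd hn0.ne' hd0, Finsupp.le_iff,
    Nat.support_factorization]
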